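/- arXiv:2307.10644 — 2 statements merged into one kernel-verified Lean document; each statement's English description precedes it below -/
import Mathlib

section
/- For μ ∈ ℝᵈ and Σ ∈ Sym₊(d,ℝ), the (d+1)×(d+1) block matrix f(μ,Σ) = [[Σ + μμᵀ, μ],[μᵀ, 1]] is symmetric positive definite. -/
open Matrix

/-- Calvo–Oller embedding of normal parameters into the SPD cone. -/
noncomputable def coEmbed {d : ℕ} (μ : Fin d → ℝ) (S : Matrix (Fin d) (Fin d) ℝ) :
    Matrix (Fin d ⊕ Fin 1) (Fin d ⊕ Fin 1) ℝ :=
  fromBlocks (S + vecMulVec μ μ) (replicateCol (Fin 1) μ) (replicateRow (Fin 1) μ) 1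

lemma coEmbed_quadform {d : ℕ} (μ : Fin d → ℝ) (S : Matrix (Fin d) (Fin d) ℝ)
    (y : Fin d → ℝ) (z : Fin 1 → ℝ) :
    Sum.elim y z ⬝ᵥ (coEmbed μ S *ᵥ Sum.elim y z) =
      y ⬝ᵥ S *ᵥ y + (μ ⬝ᵥ y + z 0) ^ 2 := by
  have h1 : vecMulVec μ μ *ᵥ y = (μ ⬝ᵥ y) • μ := by
    ext i
    simp [vecMulVec_apply, mulVec, dotProduct, Finset.mul_sum, mul_assoc, mul_comm, mul_left_comm]
  rw [coEmbed, fromBlocks_mulVec, sumElim_dotProduct_sumElim]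
  simp only [Sum.elim_comp_inl, Sum.elim_comp_inr]
  rw [add_mulVec, h1]
  simp only [dotProduct_add, dotProduct_smul, smul_eq_mul, one_mulVec]
  have h2 : y ⬝ᵥ (replicateCol (Fin 1) μ *ᵥ z) = (y ⬝ᵥ μ) * z 0 := by
    simp [mulVec, dotProduct, Fin.sum_univ_one, Finset.sum_mul, mul_assoc]
  have h3 : z ⬝ᵥ (replicateRow (Fin 1) μ *ᵥ y) = z 0 * (μ ⬝ᵥ y) := by
    simp [mulVec, dotProduct, Fin.sum_univ_one]
  have h4 : z ⬝ᵥ z = z 0 * z 0 := by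
    simp [dotProduct, Fin.sum_univ_one]
  rw [h2, h3, h4, dotProduct_comm y μ]
  ring

theorem stmt5 {d : ℕ} (μ : Fin d → ℝ) (S : Matrix (Fin d) (Fin d) ℝ) (hS : S.PosDef) :
    (coEmbed μ S).PosDef := by
  rw [posDef_iff_dotProduct_mulVec]
  constructor
  · rw [coEmbed, isHermitian_fromBlocks_iff]
    refine ⟨hS.1.add ?_, ?_, ?_, isHermitian_one⟩
    · ext i j
      simp [conjTranspose_apply, vecMulVec_apply, mul_comm]
    · ext i j
      simp [conjTranspose_apply]
    · ext i j
      simp [conjTranspose_apply]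
  · intro x hx
    have hx2 : x = Sum.elim (x ∘ Sum.inl) (x ∘ Sum.inr) := by
      ext (i | i) <;> rfl
    have hstar : star x = x := by
      ext i; simp
    rw [hstar, hx2, coEmbed_quadform]
    simp only [Function.comp_apply]
    rcases eq_or_ne (x ∘ Sum.inl) 0 with hy | hy
    · have hz : x (Sum.inr 0) ≠ 0 := by
        intro h
        apply hx
        ext (i | i)
        · exact congrFun hy i
        · simpa [Fin.eq_zero i] using h
      rw [hy]
      simpa using sq_pos_of_ne_zero hz
    · have := hS.dotProduct_mulVec_pos hy
      have h0 : (0:ℝ) ≤ (μ ⬝ᵥ (x ∘ Sum.inl) + x (Sum.inr 0)) ^ 2 := sq_nonneg _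
      have h1 : (0:ℝ) < (x ∘ Sum.inl) ⬝ᵥ S *ᵥ (x ∘ Sum.inl) := by simpa using this
      linarith
end

section
/- For μ₁, μ₂ ∈ ℝᵈ and Σ₁, Σ₂ ∈ Sym₊(d,ℝ), with P̄ᵢ = f(μᵢ,Σᵢ) = [[Σᵢ + μᵢμᵢᵀ, μᵢ],[μᵢᵀ, 1]], it holds that tr(P̄₂⁻¹ P̄₁) = 1 + tr(Σ₂⁻¹Σ₁) + (μ₁−μ₂)ᵀ Σ₂⁻¹ (μ₁−μ₂). -/
open Matrix

lemma trace_fromBlocks' {m n : Type*} [Fintype m] [Fintype n]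
    (A : Matrix m m ℝ) (B : Matrix m n ℝ) (C : Matrix n m ℝ) (D : Matrix n n ℝ) :
    (fromBlocks A B C D).trace = A.trace + D.trace := by
  simp [Matrix.trace, Fintype.sum_sum_type, fromBlocks, Matrix.diag]

lemma trace_vecMulVec' {m : Type*} [Fintype m] (a b : m → ℝ) :
    (vecMulVec a b).trace = a ⬝ᵥ b := by
  rw [vecMulVec_eq (Fin 1), trace_replicateCol_mul_replicateRow]

theorem stmt9 {d : ℕ} (μ₁ μ₂ : Fin d → ℝ) (S₁ S₂ : Matrix (Fin d) (Fin d) ℝ)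
    (h₁ : S₁.PosDef) (h₂ : S₂.PosDef) :
    ((coEmbed μ₂ S₂)⁻¹ * coEmbed μ₁ S₁).trace
      = 1 + (S₂⁻¹ * S₁).trace + (μ₁ - μ₂) ⬝ᵥ S₂⁻¹.mulVec (μ₁ - μ₂) := by
  have hdet : IsUnit S₂.det := h₂.det_pos.ne'.isUnit
  have hsymm' : S₂⁻¹ᵀ = S₂⁻¹ := by
    have := h₂.1.inv
    simpa [Matrix.IsHermitian] using this
  set w : Fin d → ℝ := S₂⁻¹.mulVec μ₂ with hw
  set c : ℝ := μ₂ ⬝ᵥ w with hc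
  have hSS : S₂ * S₂⁻¹ = 1 := Matrix.mul_nonsing_inv _ hdet
  have hvm : μ₂ ᵥ* S₂⁻¹ = w := by rw [← hsymm', vecMul_transpose]
  have hSw : S₂ *ᵥ w = μ₂ := by rw [hw, mulVec_mulVec, hSS, one_mulVec]
  have hnegrow : ∀ v : Fin d → ℝ, replicateRow (Fin 1) (-v) = -replicateRow (Fin 1) v := by
    intro v; ext i j; simp
  have hnegcol : ∀ v : Fin d → ℝ, replicateCol (Fin 1) (-v) = -replicateCol (Fin 1) v := by
    intro v; ext i j; simp
  have hinv : (coEmbed μ₂ S₂)⁻¹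
      = fromBlocks S₂⁻¹ (replicateCol (Fin 1) (-w)) (replicateRow (Fin 1) (-w)) ((1 + c) • 1) := by
    apply inv_eq_right_inv
    rw [coEmbed, fromBlocks_multiply]
    have hTL : (S₂ + vecMulVec μ₂ μ₂) * S₂⁻¹ + replicateCol (Fin 1) μ₂ * replicateRow (Fin 1) (-w) = 1 := by
      rw [add_mul, hSS, vecMulVec_eq (Fin 1), Matrix.mul_assoc, ← replicateRow_vecMul, hvm,
        hnegrow, Matrix.mul_neg]
      exact add_neg_cancel_right _ _
    have hTR : (S₂ + vecMulVec μ₂ μ₂) * replicateCol (Fin 1) (-w) + replicateCol (Fin 1) μ₂ * ((1 + c) • (1 : Matrix (Fin 1) (Fin 1) ℝ)) = 0 := by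
      rw [hnegcol, Matrix.mul_neg, Matrix.add_mul, ← replicateCol_mulVec, hSw, vecMulVec_eq (Fin 1),
        Matrix.mul_assoc, replicateRow_mul_replicateCol]
      ext i j
      simp [Matrix.mul_apply, Matrix.neg_apply, Matrix.add_apply, hc]
      ring
    have hBL : replicateRow (Fin 1) μ₂ * S₂⁻¹ + (1 : Matrix (Fin 1) (Fin 1) ℝ) * replicateRow (Fin 1) (-w) = 0 := by
      rw [← replicateRow_vecMul, hvm, Matrix.one_mul, hnegrow, add_neg_cancel]
    have hBR : replicateRow (Fin 1) μ₂ * replicateCol (Fin 1) (-w) + (1 : Matrix (Fin 1) (Fin 1) ℝ) * ((1 + c) • (1 : Matrix (Fin 1) (Fin 1) ℝ)) = 1 := by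
      ext i j
      simp [replicateRow_mul_replicateCol_apply, Matrix.one_apply, Fin.fin_one_eq_zero, hc]
    rw [hTL, hTR, hBL, hBR, ← fromBlocks_one]
  rw [hinv, coEmbed, fromBlocks_multiply, trace_fromBlocks']
  have hTLtr : (S₂⁻¹ * (S₁ + vecMulVec μ₁ μ₁) + replicateCol (Fin 1) (-w) * replicateRow (Fin 1) μ₁).trace
      = (S₂⁻¹ * S₁).trace + (S₂⁻¹ *ᵥ μ₁) ⬝ᵥ μ₁ + (-w) ⬝ᵥ μ₁ := by
    have e : (replicateCol (Fin 1) (-w) * replicateRow (Fin 1) μ₁).trace = -w ⬝ᵥ μ₁ :=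
      trace_replicateCol_mul_replicateRow (ι := Fin 1) (-w) μ₁
    rw [trace_add, mul_add, trace_add, e,
      vecMulVec_eq (Fin 1), ← Matrix.mul_assoc, ← replicateCol_mulVec, trace_replicateCol_mul_replicateRow]
  have hBRtr : (replicateRow (Fin 1) (-w) * replicateCol (Fin 1) μ₁ + ((1 + c) • (1 : Matrix (Fin 1) (Fin 1) ℝ)) * 1).trace
      = (-w) ⬝ᵥ μ₁ + (1 + c) := by
    rw [trace_add, mul_one, trace_smul]
    simp [Matrix.trace, Matrix.diag, replicateRow_mul_replicateCol_apply]
  rw [hTLtr, hBRtr]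
  have h1 : μ₂ ⬝ᵥ (S₂⁻¹ *ᵥ μ₁) = w ⬝ᵥ μ₁ := by rw [dotProduct_mulVec, hvm]
  have h2 : (S₂⁻¹ *ᵥ μ₁) ⬝ᵥ μ₁ = μ₁ ⬝ᵥ (S₂⁻¹ *ᵥ μ₁) := dotProduct_comm _ _
  have h3 : μ₁ ⬝ᵥ w = w ⬝ᵥ μ₁ := dotProduct_comm _ _
  rw [mulVec_sub, sub_dotProduct, dotProduct_sub, dotProduct_sub, ← hw, ← hc, h1, h2, h3,
    neg_dotProduct]
  ring
end
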